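/- For m a positive integer and probabilities p_0,...,p_m summing to 1, define p(u,v) = p_u * p_{m-v} if u+v ≠ m, and p(u,v) = p_u^2 - p_u if u+v = m. Then for any g, h with 0 ≤ g, h ≤ m and g+h ≥ m, the sum W(g,h) = Σ_{u=0}^{g} Σ_{v=0}^{h} p(u,v) equals Q_{m-h-1} * (1 - Q_g), where Q_u = p_0 + ... + p_u (with Q_{-1} = 0); in particular W(g,h) ≥ 0. -/
import Mathlib


open Finset

theorem stmt1 (m : ℕ) (hm : 1 ≤ m) (p : ℕ → ℝ) (hp : ∀ u, 0 ≤ p u)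
    (hsum : ∑ u ∈ Finset.range (m + 1), p u = 1)
    (g h : ℕ) (hg : g ≤ m) (hh : h ≤ m) (hgh : m ≤ g + h) :
    (∑ u ∈ Finset.range (g + 1), ∑ v ∈ Finset.range (h + 1),
        (if u + v = m then p u ^ 2 - p u else p u * p (m - v)))
      = (∑ t ∈ Finset.range (m - h), p t) * (1 - ∑ t ∈ Finset.range (g + 1), p t) ∧
    0 ≤ ∑ u ∈ Finset.range (g + 1), ∑ v ∈ Finset.range (h + 1),
        (if u + v = m then p u ^ 2 - p u else p u * p (m - v)) := by
  set Q : ℝ := ∑ t ∈ Finset.range (m - h), p t with hQ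
  set Qg : ℝ := ∑ t ∈ Finset.range (g + 1), p t with hQg
  -- the tail sum
  have hS : ∑ v ∈ Finset.range (h + 1), p (m - v) = 1 - Q := by
    have h1 : ∑ v ∈ Finset.range (h + 1), p (m - v)
        = ∑ j ∈ Finset.range (h + 1), p (m - h + j) := by
      rw [← Finset.sum_range_reflect]
      apply Finset.sum_congr rfl
      intro j hj
      simp only [Finset.mem_range] at hj
      congr 1
      omega
    have h2 : ∑ i ∈ Finset.Ico (m - h) (m + 1), p i
        = ∑ j ∈ Finset.range (h + 1), p (m - h + j) := by
      rw [Finset.sum_Ico_eq_sum_range]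
      have he : m + 1 - (m - h) = h + 1 := by omega
      rw [he]
    have h3 : ∑ i ∈ Finset.Ico (m - h) (m + 1), p i = 1 - Q := by
      rw [Finset.sum_Ico_eq_sub _ (by omega : m - h ≤ m + 1), hsum]
    rw [h1, ← h2, h3]
  -- inner sum identity
  have hinner : ∀ u ∈ Finset.range (g + 1),
      (∑ v ∈ Finset.range (h + 1),
        (if u + v = m then p u ^ 2 - p u else p u * p (m - v)))
      = p u * (1 - Q) - (if m ≤ u + h then p u else 0) := by
    intro u hu
    simp only [Finset.mem_range, Nat.lt_succ_iff] at hu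
    have hum : u ≤ m := le_trans hu hg
    have step : ∀ v ∈ Finset.range (h + 1),
        (if u + v = m then p u ^ 2 - p u else p u * p (m - v))
        = p u * p (m - v) - (if v = m - u then p u else 0) := by
      intro v hv
      simp only [Finset.mem_range, Nat.lt_succ_iff] at hv
      by_cases hc : u + v = m
      · have hv' : v = m - u := by omega
        have hmu : m - v = u := by omega
        rw [if_pos hc, if_pos hv', hmu]
        ring
      · have hne : v ≠ m - u := by omega
        rw [if_neg hc, if_neg hne]
        ring
    rw [Finset.sum_congr rfl step, Finset.sum_sub_distrib, ← Finset.mul_sum, hS]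
    congr 1
    rw [Finset.sum_ite_eq' (Finset.range (h + 1)) (m - u) (fun _ => p u)]
    simp only [Finset.mem_range, Nat.lt_succ_iff]
    by_cases hcase : m ≤ u + h
    · rw [if_pos (by omega), if_pos hcase]
    · rw [if_neg (by omega), if_neg hcase]
  rw [Finset.sum_congr rfl hinner, Finset.sum_sub_distrib, ← Finset.sum_mul]
  have hfil : ∑ u ∈ Finset.range (g + 1), (if m ≤ u + h then p u else 0)
      = Qg - Q := by
    rw [Finset.sum_ite, Finset.sum_const_zero, add_zero]
    have hfe : Finset.filter (fun u => m ≤ u + h) (Finset.range (g + 1))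
        = Finset.Ico (m - h) (g + 1) := by
      ext x
      simp only [Finset.mem_filter, Finset.mem_range, Finset.mem_Ico]
      omega
    rw [hfe, Finset.sum_Ico_eq_sub _ (by omega : m - h ≤ g + 1)]
  rw [hfil]
  constructor
  · ring
  · have hQ0 : 0 ≤ Q := Finset.sum_nonneg fun i _ => hp i
    have hQg1 : Qg ≤ 1 := by
      rw [← hsum]
      exact Finset.sum_le_sum_of_subset_of_nonneg
        (Finset.range_subset_range.2 (by omega)) (fun i _ _ => hp i)
    nlinarith
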